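/- arXiv:1902.05465 — 3 statements merged into one kernel-verified Lean document; each statement's English description precedes it below -/
import Mathlib

section
/- Derivative sequences of composites: for pre-ω-differential maps f : A ⇒ B and g : B ⇒ C between ω-sequences of types, and for all n : ℕ and 0 ≤ j ≤ n, (D^n (g ∘ f))_j = (D^n g)_j ∘ (D^{n+j} f)_0 as functions (DA)_{n+j} → (D(Π^j C))_n. -/
universe u

/-- `DSeqAt A i n` is the `n`-th derivative space `(D (Πⁱ A))_n` of the `i`-fold
shift `Πⁱ A` of the ω-sequence of types `A` (where `(Π A)_k = A (k+1)`), so that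
`(D X)_0 = X 0` and `(D X)_{n+1} = (D X)_n × (D (Π X))_n`. -/
def DSeqAt (A : ℕ → Type u) : ℕ → ℕ → Type u
  | i, 0 => A i
  | i, n + 1 => DSeqAt A i n × DSeqAt A (i + 1) n

/-- A pre-ω-differential map `f : A ⇒ B` is a family of maps `f j : (D A)_j → B j`. -/
def PreOmegaMap (A B : ℕ → Type u) : Type u :=
  ∀ j, DSeqAt A 0 j → B j

/-- The structural map `e^j : (D (Πⁱ A))_{m+1} → (D (Πⁱ A))_m`, defined by
`e^0 = π₁` and `e^{j+1} = e^j × e^j` (meaningful for `j ≤ m`). -/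
def eMap (A : ℕ → Type u) : (i j m : ℕ) → DSeqAt A i (m + 1) → DSeqAt A i m
  | _, 0, _ => Prod.fst
  | _, _ + 1, 0 => Prod.fst
  | i, j + 1, m + 1 => fun p => (eMap A i j m p.1, eMap A (i + 1) j m p.2)

/-- The structural map `c^j : (D (Πⁱ A))_j → (Π^{i+j} A)_0 = A (i + j)` (the
instance `m = 0` of `c^j : (D (Πⁱ A))_{m+j} → (D (Π^{i+j} A))_m`), defined by
`c^0 = id` and `c^{j+1} = c^j ∘ π₂`. -/
def cMap (A : ℕ → Type u) : (i j : ℕ) → DSeqAt A i j → A (i + j)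
  | _, 0 => id
  | i, j + 1 => fun p => cast (congrArg A (Nat.succ_add i j)) (cMap A (i + 1) j p.2)

/-- The iterated derivative sequence: `DMap f n j` is `(Dⁿ f)_j : (D A)_{n+j} → (D (Πʲ B))_n`,
defined by `(D⁰ f)_j = f j` and `(D^{n+1} f)_j = ⟨(Dⁿ f)_j ∘ e^j, (Dⁿ f)_{j+1}⟩`. -/
def DMap {A B : ℕ → Type u} (f : PreOmegaMap A B) :
    (n j : ℕ) → DSeqAt A 0 (n + j) → DSeqAt B j n
  | 0, j => fun p => f j (cast (congrArg (DSeqAt A 0) (Nat.zero_add j)) p)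
  | n + 1, j => fun p =>
      let p' : DSeqAt A 0 (n + j + 1) :=
        cast (congrArg (DSeqAt A 0) (Nat.succ_add n j)) p
      (DMap f n j (eMap A 0 j (n + j) p'), DMap f n (j + 1) p')

/-- Composition of pre-ω-differential maps: `(g ∘ f)_j = g_j ∘ (Dʲ f)_0`. -/
def compPre {A B C : ℕ → Type u} (g : PreOmegaMap B C) (f : PreOmegaMap A B) :
    PreOmegaMap A C :=
  fun j p => g j (DMap f j 0 p)

/-- The identity pre-ω-differential map: `Id_j = c^j`. -/
def idPre (A : ℕ → Type u) : PreOmegaMap A A :=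
  fun j p => cast (congrArg A (Nat.zero_add j)) (cMap A 0 j p)

theorem eMap_hcongr {A : ℕ → Type u} {i j j' m m' : ℕ} (hj : j = j') (hm : m = m')
    {p : DSeqAt A i (m + 1)} {p' : DSeqAt A i (m' + 1)} (hp : HEq p p') :
    HEq (eMap A i j m p) (eMap A i j' m' p') := by
  subst hj; subst hm; rw [eq_of_heq hp]

theorem DMap_hcongr {A B : ℕ → Type u} (f : PreOmegaMap A B) {n n' j : ℕ} (h : n = n')
    {p : DSeqAt A 0 (n + j)} {p' : DSeqAt A 0 (n' + j)} (hp : HEq p p') :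
    HEq (DMap f n j p) (DMap f n' j p') := by
  subst h; rw [eq_of_heq hp]

theorem eMap_level_zero {A : ℕ → Type u} (i a : ℕ) : eMap A i a 0 = Prod.fst := by
  cases a <;> rfl

theorem eMap_ge {A : ℕ → Type u} :
    ∀ (m i a b : ℕ), m ≤ a → m ≤ b → eMap A i a m = eMap A i b m := by
  intro m
  induction m with
  | zero => intro i a b _ _; rw [eMap_level_zero, eMap_level_zero]
  | succ m ih =>
    intro i a b ha hb
    obtain ⟨a', rfl⟩ : ∃ a', a = a' + 1 := ⟨a - 1, by omega⟩
    obtain ⟨b', rfl⟩ : ∃ b', b = b' + 1 := ⟨b - 1, by omega⟩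
    funext p
    show (eMap A i a' m p.1, eMap A (i+1) a' m p.2)
       = (eMap A i b' m p.1, eMap A (i+1) b' m p.2)
    rw [ih i a' b' (by omega) (by omega), ih (i+1) a' b' (by omega) (by omega)]

theorem eMap_eMap {A : ℕ → Type u} :
    ∀ (m i a b : ℕ), a ≤ b → ∀ p : DSeqAt A i (m + 2),
      eMap A i b m (eMap A i a (m + 1) p)
        = eMap A i a m (eMap A i (b + 1) (m + 1) p) := by
  intro m
  induction m with
  | zero =>
    intro i a b hab p
    rcases a with _ | a
    · show eMap A i b 0 p.1 = (eMap A i (b+1) 1 p).1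
      show eMap A i b 0 p.1 = eMap A i b 0 p.1
      rfl
    · obtain ⟨b', rfl⟩ : ∃ b', b = b' + 1 := ⟨b - 1, by omega⟩
      show eMap A i (b'+1) 0 (eMap A i a 0 p.1, eMap A (i+1) a 0 p.2)
         = eMap A i (a+1) 0 (eMap A i (b'+1) 0 p.1, eMap A (i+1) (b'+1) 0 p.2)
      simp only [eMap_level_zero]
  | succ m ih =>
    intro i a b hab p
    rcases a with _ | a
    · show eMap A i b (m+1) p.1 = (eMap A i (b+1) (m+2) p).1
      rfl
    · obtain ⟨b', rfl⟩ : ∃ b', b = b' + 1 := ⟨b - 1, by omega⟩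
      show (eMap A i b' m (eMap A i a (m+1) p.1), eMap A (i+1) b' m (eMap A (i+1) a (m+1) p.2))
         = (eMap A i a m (eMap A i (b'+1) (m+1) p.1), eMap A (i+1) a m (eMap A (i+1) (b'+1) (m+1) p.2))
      rw [ih i a b' (by omega), ih (i+1) a b' (by omega)]

theorem DMap_succ {A B : ℕ → Type u} (f : PreOmegaMap A B) (n j : ℕ)
    (p : DSeqAt A 0 (n + 1 + j)) :
    DMap f (n + 1) j p =
      (DMap f n j (eMap A 0 j (n + j) (cast (congrArg (DSeqAt A 0) (Nat.succ_add n j)) p)),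
       DMap f n (j + 1) (cast (congrArg (DSeqAt A 0) (Nat.succ_add n j)) p)) := rfl

theorem eMap_succ {A : ℕ → Type u} (i j m : ℕ) (p : DSeqAt A i (m + 2)) :
    eMap A i (j + 1) (m + 1) p = (eMap A i j m p.1, eMap A (i + 1) j m p.2) := rfl

theorem eMap_DMap {A B : ℕ → Type u} (f : PreOmegaMap A B) :
    ∀ (j k m : ℕ) (p : DSeqAt A 0 (m + 1 + k)) (p' : DSeqAt A 0 (m + k + 1)),
      HEq p p' →
      eMap B k j m (DMap f (m + 1) k p) = DMap f m k (eMap A 0 (j + k) (m + k) p') := by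
  intro j
  induction j with
  | zero =>
    intro k m p p' hp
    have hpp : cast (congrArg (DSeqAt A 0) (Nat.succ_add m k)) p = p' :=
      eq_of_heq ((cast_heq _ _).trans hp)
    rw [DMap_succ]
    show DMap f m k (eMap A 0 k (m + k) _) = _
    rw [hpp, Nat.zero_add]
  | succ j ih =>
    intro k m p p' hp
    cases m with
    | zero =>
      have hpp : cast (congrArg (DSeqAt A 0) (Nat.succ_add 0 k)) p = p' :=
        eq_of_heq ((cast_heq _ _).trans hp)
      rw [DMap_succ]
      show DMap f 0 k (eMap A 0 k (0 + k) _) = _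
      rw [hpp, eMap_ge (0 + k) 0 k (j + 1 + k) (by omega) (by omega)]
    | succ m =>
      have hx : (m + 1 + k + 1 : ℕ) = m + k + 2 := by omega
      set x : DSeqAt A 0 (m + k + 2) := cast (congrArg (DSeqAt A 0) hx) p' with hxdef
      have hp'x : HEq p' x := (cast_heq _ _).symm
      have hp1 : HEq (cast (congrArg (DSeqAt A 0) (Nat.succ_add (m + 1) k)) p) x :=
        ((cast_heq _ _).trans hp).trans hp'x
      set p1 := cast (congrArg (DSeqAt A 0) (Nat.succ_add (m + 1) k)) p with hp1def
      have hr : cast (congrArg (DSeqAt A 0) (Nat.succ_add m k))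
            (eMap A 0 (j + 1 + k) (m + 1 + k) p')
          = eMap A 0 (j + k + 1) (m + k + 1) x := by
        refine eq_of_heq (((cast_heq _ _)).trans ?_)
        exact eMap_hcongr (by omega) (by omega) hp'x
      conv_rhs => rw [DMap_succ]
      rw [hr, ← eMap_eMap (m + k) 0 k (j + k) (by omega) x]
      conv_lhs => rw [eMap_succ, DMap_succ]
      refine Prod.ext ?_ ?_
      · exact ih k m (eMap A 0 k (m + 1 + k) p1) (eMap A 0 k (m + k + 1) x)
          (eMap_hcongr rfl (by omega) hp1)
      · exact ih (k + 1) m p1 x hp1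

/-- Derivative sequences of composites: for all `n` and `j ≤ n`,
`(Dⁿ (g ∘ f))_j = (Dⁿ g)_j ∘ (D^{n+j} f)_0` as functions
`(D A)_{n+j} → (D (Πʲ C))_n`. -/
theorem DMap_comp {A B C : ℕ → Type u}
    (f : PreOmegaMap A B) (g : PreOmegaMap B C) (n j : ℕ) (hj : j ≤ n) :
    DMap (compPre g f) n j = DMap g n j ∘ DMap f (n + j) 0 := by
  clear hj
  induction n generalizing j with
  | zero =>
    funext p
    show g j (DMap f j 0 (cast (congrArg (DSeqAt A 0) (Nat.zero_add j)) p))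
       = g j (cast (congrArg (DSeqAt B 0) (Nat.zero_add j)) (DMap f (0 + j) 0 p))
    exact congrArg (g j) (eq_of_heq
      ((DMap_hcongr f ((Nat.zero_add j).symm) (cast_heq _ _)).trans (cast_heq _ _).symm))
  | succ n ih =>
    funext p
    have hq : cast (congrArg (DSeqAt B 0) (Nat.succ_add n j)) (DMap f (n + 1 + j) 0 p)
        = DMap f (n + j + 1) 0 (cast (congrArg (DSeqAt A 0) (Nat.succ_add n j)) p) :=
      eq_of_heq ((cast_heq _ _).trans (DMap_hcongr f (by omega) (cast_heq _ _).symm))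
    show DMap (compPre g f) (n + 1) j p = DMap g (n + 1) j (DMap f (n + 1 + j) 0 p)
    rw [DMap_succ, DMap_succ, hq, ih, ih]
    refine Prod.ext ?_ ?_
    · exact congrArg (DMap g n j)
        (eMap_DMap f j 0 (n + j) _ _ HEq.rfl).symm
    · rfl
end

section
/- For every pre-ω-differential map f : A ⇒ B between ω-sequences of types and all j, k : ℕ, c^j ∘ (D^j f)_k = f_{j+k} as functions (DA)_{j+k} → B_{j+k}. -/
universe u

private lemma f_cast_heq {A B : ℕ → Type u} (f : PreOmegaMap A B) {n m : ℕ}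
    (h : n = m) (p : DSeqAt A 0 n) :
    HEq (f m (cast (congrArg (DSeqAt A 0) h) p)) (f n p) := by
  subst h; rfl

private lemma cMap_DMap_heq {A B : ℕ → Type u} (f : PreOmegaMap A B) :
    ∀ (j k : ℕ) (p : DSeqAt A 0 (j + k)),
      HEq (cMap B k j (DMap f j k p)) (f (j + k) p)
  | 0, k, p => by
      simp only [DMap, cMap, id]
      exact f_cast_heq f (Nat.zero_add k) p
  | j + 1, k, p => by
      simp only [DMap, cMap]
      refine HEq.trans (cast_heq _ _) ?_
      refine HEq.trans (cMap_DMap_heq f j (k + 1) _) ?_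
      exact f_cast_heq f (Nat.succ_add j k) p

/-- For every pre-ω-differential map `f : A ⇒ B` and all `j k`,
`c^j ∘ (Dʲ f)_k = f_{j+k}` as functions `(D A)_{j+k} → B (j+k)`. -/
theorem cMap_DMap {A B : ℕ → Type u} (f : PreOmegaMap A B) (j k : ℕ) :
    (fun p => cast (congrArg B (Nat.add_comm k j)) (cMap B k j (DMap f j k p))) =
      f (j + k) := by
  funext p
  exact cast_eq_iff_heq.mpr (cMap_DMap_heq f j k p)
end

section
/- Derivative sequences commute with the structural maps e^j: for every pre-ω-differential map f : A ⇒ B between ω-sequences of types and all n, i : ℕ and j ≤ n, (D^n f)_i ∘ e^{i+j} = e^j ∘ (D^{n+1} f)_i as functions (DA)_{n+i+1} → (D(Π^i B))_n. -/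
universe u

lemma eMap_cast (A : ℕ → Type u) (i j : ℕ) {m m' : ℕ} (h : m = m')
    (p : DSeqAt A i (m + 1)) :
    eMap A i j m' (cast (congrArg (DSeqAt A i) (congrArg Nat.succ h)) p) =
      cast (congrArg (DSeqAt A i) h) (eMap A i j m p) := by
  subst h; rfl

lemma eComm (A : ℕ → Type u) (i : ℕ) :
    ∀ (a b m : ℕ), a ≤ b → ∀ p : DSeqAt A i (m + 2),
      eMap A i a m (eMap A i (b + 1) (m + 1) p) =
        eMap A i b m (eMap A i a (m + 1) p)
  | 0, b, m, _, p => rfl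
  | a + 1, b + 1, 0, _, p => by
      cases a <;> rfl
  | a + 1, b + 1, m + 1, h, p => by
      simp only [eMap]
      exact Prod.ext (eComm A i a b m (Nat.succ_le_succ_iff.mp h) p.1)
        (eComm A (i + 1) a b m (Nat.succ_le_succ_iff.mp h) p.2)

lemma eMap_congr (A : ℕ → Type u) (i : ℕ) {j j' m m' : ℕ} (hj : j = j') (hm : m = m')
    {p : DSeqAt A i (m + 1)} {q : DSeqAt A i (m' + 1)} (hpq : HEq p q) :
    HEq (eMap A i j m p) (eMap A i j' m' q) := by
  subst hj; subst hm; rw [eq_of_heq hpq]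

lemma DMap_congr {A B : ℕ → Type u} (f : PreOmegaMap A B) {n n' j j' : ℕ}
    (hn : n = n') (hj : j = j')
    {p : DSeqAt A 0 (n + j)} {q : DSeqAt A 0 (n' + j')} (hpq : HEq p q) :
    HEq (DMap f n j p) (DMap f n' j' q) := by
  subst hn; subst hj; rw [eq_of_heq hpq]

lemma aux {A B : ℕ → Type u} (f : PreOmegaMap A B) :
    ∀ (n i j : ℕ), j ≤ n → ∀ (p : DSeqAt A 0 (n + i + 1)) (q : DSeqAt A 0 ((n + 1) + i)),
      HEq p q →
      DMap f n i (eMap A 0 (i + j) (n + i) p) = eMap B i j n (DMap f (n + 1) i q)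
  | n, i, 0 => by
    intro _ p q hpq
    have hq : cast (congrArg (DSeqAt A 0) (Nat.succ_add n i)) q = p :=
      eq_of_heq ((cast_heq _ _).trans hpq.symm)
    show DMap f n i (eMap A 0 (i + 0) (n + i) p) =
      DMap f n i (eMap A 0 i (n + i) (cast (congrArg (DSeqAt A 0) (Nat.succ_add n i)) q))
    rw [hq]
    exact rfl
  | 0, _, _ + 1 => by
    intro hj
    exact absurd hj (by omega)
  | n + 1, i, j + 1 => by
    intro hj p q hpq
    have hj' : j ≤ n := by omega
    have hq : cast (congrArg (DSeqAt A 0) (Nat.succ_add (n + 1) i)) q = p :=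
      eq_of_heq ((cast_heq _ _).trans hpq.symm)
    -- `pc` is `p` recast at level `n + i + 1 + 1`
    have h2 : (n + 1) + i + 1 = n + i + 1 + 1 := by omega
    set pc : DSeqAt A 0 (n + i + 1 + 1) := cast (congrArg (DSeqAt A 0) h2) p with hpc
    have hpcp : HEq pc p := cast_heq _ _
    -- r' : the recast argument appearing on the LHS
    set r' : DSeqAt A 0 (n + i + 1) :=
      cast (congrArg (DSeqAt A 0) (Nat.succ_add n i))
        (eMap A 0 (i + (j + 1)) (n + 1 + i) p) with hr'def
    have hr' : r' = eMap A 0 (i + (j + 1)) (n + i + 1) pc :=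
      eq_of_heq ((cast_heq _ _).trans
        (eMap_congr A 0 rfl (Nat.succ_add n i) hpcp.symm))
    -- unfold the LHS one step
    have hL : DMap f (n + 1) i (eMap A 0 (i + (j + 1)) (n + 1 + i) p) =
        (DMap f n i (eMap A 0 i (n + i) r'), DMap f n (i + 1) r') := rfl
    -- unfold the RHS one step
    have hR : DMap f (n + 1 + 1) i q =
        (DMap f (n + 1) i (eMap A 0 i ((n + 1) + i) p), DMap f (n + 1) (i + 1) p) := by
      show (DMap f (n + 1) i (eMap A 0 i ((n + 1) + i)
              (cast (congrArg (DSeqAt A 0) (Nat.succ_add (n + 1) i)) q)),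
            DMap f (n + 1) (i + 1)
              (cast (congrArg (DSeqAt A 0) (Nat.succ_add (n + 1) i)) q)) = _
      rw [hq]
    rw [hL, hR]
    show (DMap f n i (eMap A 0 i (n + i) r'), DMap f n (i + 1) r') =
      (eMap B i j n (DMap f (n + 1) i (eMap A 0 i ((n + 1) + i) p)),
       eMap B (i + 1) j n (DMap f (n + 1) (i + 1) p))
    refine Prod.ext ?_ ?_
    · -- first component
      set Q : DSeqAt A 0 ((n + 1) + i) := eMap A 0 i ((n + 1) + i) p with hQ
      set P : DSeqAt A 0 (n + i + 1) :=
        cast (congrArg (DSeqAt A 0) (Nat.succ_add n i)) Q with hP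
      have hPQ : HEq P Q := cast_heq _ _
      have hPe : P = eMap A 0 i (n + i + 1) pc :=
        eq_of_heq (hPQ.trans (eMap_congr A 0 rfl (Nat.succ_add n i) hpcp.symm))
      have claimA : eMap A 0 i (n + i) r' = eMap A 0 (i + j) (n + i) P := by
        rw [hr', hPe]
        exact eComm A 0 i (i + j) (n + i) (Nat.le_add_right i j) pc
      exact (congrArg (DMap f n i) claimA).trans (aux f n i j hj' P Q hPQ)
    · -- second component
      have h3 : (n + 1) + i + 1 = n + (i + 1) + 1 := by omega
      set P2 : DSeqAt A 0 (n + (i + 1) + 1) := cast (congrArg (DSeqAt A 0) h3) p with hP2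
      have hP2p : HEq P2 p := cast_heq _ _
      have hP2pc : P2 = pc := eq_of_heq (hP2p.trans hpcp.symm)
      have claimB : DMap f n (i + 1) r' =
          DMap f n (i + 1) (eMap A 0 ((i + 1) + j) (n + (i + 1)) P2) := by
        rw [hr', hP2pc]
        have hidx : (i + 1) + j = i + (j + 1) := by omega
        rw [hidx]
        exact rfl
      exact claimB.trans (aux f n (i + 1) j hj' P2 p hP2p)

/-- Derivative sequences commute with the structural maps `e`: for `j ≤ n`,
`(Dⁿ f)_i ∘ e^{i+j} = e^j ∘ (D^{n+1} f)_i` as functions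
`(D A)_{n+i+1} → (D (Πⁱ B))_n`. -/
theorem DMap_eMap {A B : ℕ → Type u} (f : PreOmegaMap A B)
    (n i j : ℕ) (hj : j ≤ n) :
    DMap f n i ∘ eMap A 0 (i + j) (n + i) =
      eMap B i j n ∘ DMap f (n + 1) i ∘
        (fun p : DSeqAt A 0 (n + i + 1) =>
          cast (congrArg (DSeqAt A 0) (Nat.succ_add n i).symm) p) := by
  funext p
  exact aux f n i j hj p _ (cast_heq _ _).symm
end
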